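/- Let M ≥ 5 be prime and let 1 ≤ ñ ≤ ⌊M/2⌋. Let k_1,…,k_ñ ∈ {0,…,M−1} be pairwise distinct and let l_1,…,l_ñ ∈ {0,…,M−1} be arbitrary. Then the ñ Gabor frame vectors g_{k_1,l_1},…,g_{k_ñ,l_ñ} (one codeword per active user) are linearly independent in ℂ^M; in particular, the subspace of ℂ^M they span has dimension exactly ñ. -/

import Mathlib

open scoped BigOperators

/-- The Gabor frame vector `g_{k,l} ∈ ℂ^M`, with
`g_{k,l}(m) = exp(2πi·((m−k)³ + l·m)/M)`. -/
noncomputable def gabor (M : ℕ) (k l : Fin M) : Fin M → ℂ :=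
  fun m => Complex.exp (2 * Real.pi * Complex.I *
    ((((m : ℕ) : ℂ) - ((k : ℕ) : ℂ)) ^ 3 + ((l : ℕ) : ℂ) * ((m : ℕ) : ℂ)) / (M : ℂ))

/-- The inner product `⟨u,v⟩ = ∑_{m} u(m)·conj(v(m))` on `ℂ^M`. -/
noncomputable def gip (M : ℕ) (u v : Fin M → ℂ) : ℂ :=
  ∑ m : Fin M, u m * (starRingEnd ℂ) (v m)

open Finset Polynomial Matrix

set_option linter.unusedSectionVars false
set_option linter.unusedVariables false
set_option linter.deprecated false

section setup
variable (p : ℕ) [Fact p.Prime]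

noncomputable def zet : ℂ := Complex.exp (2 * Real.pi * Complex.I / p)

lemma zet_prim : IsPrimitiveRoot (zet p) p :=
  Complex.isPrimitiveRoot_exp p (Fact.out : p.Prime).ne_zero

lemma zet_pow : (zet p) ^ p = 1 := (zet_prim p).pow_eq_one

noncomputable def psi : AddChar (ZMod p) ℂ :=
  haveI : NeZero p := ⟨(Fact.out : p.Prime).ne_zero⟩
  AddChar.zmodChar p (zet_pow p)

lemma psi_apply (x : ZMod p) : psi p x = (zet p) ^ x.val := by
  haveI : NeZero p := ⟨(Fact.out : p.Prime).ne_zero⟩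
  exact AddChar.zmodChar_apply (zet_pow p) x

lemma psi_ne_zero (x : ZMod p) : psi p x ≠ 0 := by
  rw [psi_apply]
  exact pow_ne_zero _ (by
    intro h
    have := zet_pow p
    rw [h] at this
    simp [zero_pow (Fact.out : p.Prime).ne_zero] at this)

lemma psi_primitive : (psi p).IsPrimitive := by
  haveI : NeZero p := ⟨(Fact.out : p.Prime).ne_zero⟩
  exact AddChar.zmodChar_primitive_of_primitive_root p (zet_prim p)

lemma exp_int (x : ℤ) : Complex.exp (2 * Real.pi * Complex.I * x / p) = psi p (x : ZMod p) := by
  haveI : NeZero p := ⟨(Fact.out : p.Prime).ne_zero⟩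
  rw [psi_apply]
  set v : ℕ := ((x : ZMod p)).val with hv
  have hvx : ((v : ℤ) : ZMod p) = (x : ZMod p) := by
    push_cast
    exact ZMod.natCast_rightInverse _
  have hdvd : (p : ℤ) ∣ x - v := by
    have : ((x - v : ℤ) : ZMod p) = 0 := by
      push_cast
      rw [sub_eq_zero]
      exact (hvx.symm.trans (by push_cast; ring))
    exact (ZMod.intCast_zmod_eq_zero_iff_dvd _ _).mp this
  obtain ⟨t, ht⟩ := hdvd
  have hx : (x : ℂ) = v + p * t := by
    have : x = v + p * t := by linarith [ht]
    exact_mod_cast congrArg (Int.cast : ℤ → ℂ) this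
  have hp0 : (p : ℂ) ≠ 0 := Nat.cast_ne_zero.mpr (Fact.out : p.Prime).ne_zero
  rw [hx]
  rw [show 2 * Real.pi * Complex.I * ((v : ℂ) + p * t) / p
      = (v : ℂ) * (2 * Real.pi * Complex.I / p) + t * (2 * Real.pi * Complex.I) by
    field_simp]
  rw [Complex.exp_add]
  rw [show ((t : ℂ) * (2 * Real.pi * Complex.I)) = t * (2 * Real.pi * Complex.I) from rfl]
  rw [Complex.exp_int_mul_two_pi_mul_I t, mul_one]
  rw [zet, ← Complex.exp_nat_mul]
end setup


section gauss
variable (p : ℕ) [Fact p.Prime]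
noncomputable def chiZ : MulChar (ZMod p) ℤ := quadraticChar (ZMod p)
noncomputable def chiC : MulChar (ZMod p) ℂ := (chiZ p).ringHomComp (Int.castRingHom ℂ)
noncomputable def gs : ℂ := gaussSum (chiC p) (psi p)

variable (hp2 : p ≠ 2)
include hp2

lemma ringchar_ne_two : ringChar (ZMod p) ≠ 2 := by
  rw [ZMod.ringChar_zmod_n]; exact hp2

lemma chiC_ne_one : chiC p ≠ 1 :=
  (MulChar.ringHomComp_ne_one_iff (RingHom.injective_int _)).mpr
    (quadraticChar_ne_one (ringchar_ne_two p hp2))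

lemma gs_ne_zero : gs p ≠ 0 := by
  apply gaussSum_ne_zero_of_nontrivial _ (chiC_ne_one p hp2) (psi_primitive p)
  rw [ZMod.card]
  exact Nat.cast_ne_zero.mpr (Fact.out : p.Prime).ne_zero

lemma chiC_mul_self {α : ZMod p} (hα : α ≠ 0) : chiC p α * chiC p α = 1 := by
  have : chiZ p α * chiZ p α = 1 := by
    have := quadraticChar_sq_one (F := ZMod p) hα
    rwa [pow_two] at this
  unfold chiC
  simp only [MulChar.ringHomComp_apply]
  rw [← _root_.map_mul, this, _root_.map_one]

lemma sum_psi_sq {α : ZMod p} (hα : α ≠ 0) :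
    ∑ m : ZMod p, psi p (α * m ^ 2) = chiC p α * gs p := by
  classical
  have step1 : ∑ m : ZMod p, psi p (α * m ^ 2)
      = ∑ u : ZMod p, ∑ m ∈ univ.filter (fun m : ZMod p => m ^ 2 = u), psi p (α * m ^ 2) := by
    exact (Finset.sum_fiberwise_of_maps_to (fun m _ => Finset.mem_univ (m ^ 2)) _).symm
  have step2 : ∀ u : ZMod p, ∑ m ∈ univ.filter (fun m : ZMod p => m ^ 2 = u), psi p (α * m ^ 2)
      = ((chiZ p u : ℂ) + 1) * psi p (α * u) := by
    intro u
    have hcount : (((univ.filter (fun m : ZMod p => m ^ 2 = u)).card : ℤ)) = chiZ p u + 1 := by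
      have h2 := quadraticChar_card_sqrts (ringchar_ne_two p hp2) u
      rw [Set.toFinset_setOf] at h2
      unfold chiZ
      exact_mod_cast h2
    calc ∑ m ∈ univ.filter (fun m : ZMod p => m ^ 2 = u), psi p (α * m ^ 2)
        = ∑ m ∈ univ.filter (fun m : ZMod p => m ^ 2 = u), psi p (α * u) :=
          Finset.sum_congr rfl (fun m hm => by
            rw [Finset.mem_filter] at hm
            rw [hm.2])
      _ = ((univ.filter (fun m : ZMod p => m ^ 2 = u)).card : ℂ) * psi p (α * u) := by
          rw [Finset.sum_const, nsmul_eq_mul]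
      _ = ((chiZ p u : ℂ) + 1) * psi p (α * u) := by
          congr 1
          have : ((univ.filter (fun m : ZMod p => m ^ 2 = u)).card : ℂ)
              = (((univ.filter (fun m : ZMod p => m ^ 2 = u)).card : ℤ) : ℂ) := by push_cast; ring
          rw [this, hcount]; push_cast; ring
  have step3 : ∑ u : ZMod p, psi p (α * u) = 0 := by
    have hns : (psi p).mulShift α ≠ 0 := psi_primitive p hα
    have := AddChar.sum_eq_zero_iff_ne_zero.mpr hns
    rw [← this]
    exact Finset.sum_congr rfl fun u _ => by rw [AddChar.mulShift_apply]
  have step4 : ∑ u : ZMod p, (chiZ p u : ℂ) * psi p (α * u) = chiC p α * gs p := by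
    have hu : IsUnit α := hα.isUnit
    have hgs : ∑ u : ZMod p, (chiZ p u : ℂ) * psi p (α * u)
        = gaussSum (chiC p) ((psi p).mulShift α) := by
      unfold gaussSum
      refine Finset.sum_congr rfl fun u _ => ?_
      rw [AddChar.mulShift_apply]
      rfl
    have hms := gaussSum_mulShift (chiC p) (psi p) hu.unit
    rw [hu.unit_spec] at hms
    rw [hgs]
    calc gaussSum (chiC p) ((psi p).mulShift α)
        = (chiC p α * chiC p α) * gaussSum (chiC p) ((psi p).mulShift α) := by
          rw [chiC_mul_self p hp2 hα, one_mul]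
      _ = chiC p α * (chiC p α * gaussSum (chiC p) ((psi p).mulShift α)) := by ring
      _ = chiC p α * gs p := by rw [hms]; rfl
  rw [step1]
  rw [Finset.sum_congr rfl fun u _ => step2 u]
  calc ∑ u : ZMod p, ((chiZ p u : ℂ) + 1) * psi p (α * u)
      = ∑ u : ZMod p, ((chiZ p u : ℂ) * psi p (α * u)) + ∑ u : ZMod p, psi p (α * u) := by
        rw [← Finset.sum_add_distrib]; exact Finset.sum_congr rfl fun u _ => by ring
    _ = chiC p α * gs p := by rw [step3, step4, add_zero]
end gauss


theorem moments_zero (p n : ℕ) [Fact p.Prime] (hpn : 2 * n < p)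
    (a : Fin n → ZMod p) (ha : Function.Injective a) (lam : Fin n → ZMod p)
    (hlam : ∀ c : ZMod p, c ∉ Set.range a → ∑ i, lam i * (a i - c) ^ (p / 2) = 0) :
    lam = 0 := by
  classical
  set h := p / 2 with hh
  have hp : p.Prime := Fact.out
  haveI : NeZero p := ⟨hp.ne_zero⟩
  have hcardK : Fintype.card (ZMod p) = p := ZMod.card p
  -- the finset of valid c's, negated
  set T : Finset (ZMod p) := univ \ (univ.image a) with hT
  have hTcard : p - n ≤ T.card := by
    have h1 : (univ.image a).card ≤ n := by
      refine le_trans (Finset.card_image_le) ?_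
      simp
    have h2 : (univ : Finset (ZMod p)).card = p := by rw [Finset.card_univ, hcardK]
    have h3 : T.card = (univ : Finset (ZMod p)).card - (univ.image a).card := by
      rw [hT]; exact Finset.card_sdiff_of_subset (Finset.subset_univ (univ.image a))
    omega
  -- polynomial F
  set F : Polynomial (ZMod p) := ∑ i : Fin n, C (lam i) * (X + C (a i)) ^ h with hF
  have hdeg : F.natDegree ≤ h := by
    refine Polynomial.natDegree_sum_le_of_forall_le _ _ (fun i _ => ?_)
    refine le_trans (Polynomial.natDegree_mul_le) ?_
    simp only [Polynomial.natDegree_C, zero_add]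
    refine le_trans (Polynomial.natDegree_pow_le) ?_
    have : (X + C (a i)).natDegree ≤ 1 := by
      refine le_trans (Polynomial.natDegree_add_le _ _) ?_
      simp
    nlinarith
  have heval : ∀ c ∈ T.image (fun x => -x), F.eval c = 0 := by
    intro c hc
    rw [Finset.mem_image] at hc
    obtain ⟨x, hx, rfl⟩ := hc
    rw [hT, Finset.mem_sdiff] at hx
    have hxr : x ∉ Set.range a := by
      intro ⟨i, hi⟩
      exact hx.2 (Finset.mem_image.mpr ⟨i, Finset.mem_univ i, hi⟩)
    have := hlam x hxr
    rw [hF]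
    rw [Polynomial.eval_finset_sum]
    simpa [sub_eq_add_neg, add_comm] using this
  have hTneg : h < (T.image (fun x => -x)).card := by
    rw [Finset.card_image_of_injective _ neg_injective]
    omega
  have hF0 : F = 0 :=
    Polynomial.eq_zero_of_natDegree_lt_card_of_eval_eq_zero' F _ heval
      (lt_of_le_of_lt hdeg hTneg)
  -- moments
  have hmom : ∀ r : ℕ, r ≤ h → ∑ i, lam i * (a i) ^ r = 0 := by
    intro r hr
    have hcoeff := congrArg (fun q => Polynomial.coeff q (h - r)) hF0
    simp only [Polynomial.coeff_zero] at hcoeff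
    rw [hF, Polynomial.finset_sum_coeff] at hcoeff
    have hconv : ∀ i : Fin n,
        (C (lam i) * (X + C (a i)) ^ h).coeff (h - r) = lam i * ((a i) ^ r * (h.choose (h - r) : ZMod p)) := by
      intro i
      rw [Polynomial.coeff_C_mul, Polynomial.coeff_X_add_C_pow]
      congr 2
      congr 1
      omega
    rw [Finset.sum_congr rfl (fun i _ => hconv i)] at hcoeff
    have hchoose : ((h.choose (h - r) : ZMod p)) ≠ 0 := by
      have hdvd : ¬ (p ∣ h.choose (h - r)) := by
        intro hd
        have h1 : h.choose (h - r) * ((h - r).factorial * (h - (h - r)).factorial) = h.factorial := by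
          have := Nat.choose_mul_factorial_mul_factorial (show h - r ≤ h by omega) (n := h)
          rw [← this]; ring
        have h2 : p ∣ h.factorial := by
          rw [← h1]
          exact Dvd.dvd.mul_right hd _
        have := (Nat.Prime.dvd_factorial hp).mp h2
        omega
      simpa [ZMod.natCast_eq_zero_iff] using hdvd
    have : (∑ i, lam i * (a i) ^ r) * (h.choose (h - r) : ZMod p) = 0 := by
      rw [Finset.sum_mul]
      rw [← hcoeff]
      exact Finset.sum_congr rfl fun i _ => by ring
    exact (mul_eq_zero.mp this).resolve_right hchoose
  -- Vandermonde
  set V : Matrix (Fin n) (Fin n) (ZMod p) := Matrix.vandermonde a with hV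
  have hdet : IsUnit V.det := by
    rw [hV, Matrix.det_vandermonde]
    refine IsUnit.mk0 _ ?_
    refine Finset.prod_ne_zero_iff.mpr (fun i _ => ?_)
    refine Finset.prod_ne_zero_iff.mpr (fun j hj => ?_)
    rw [Finset.mem_Ioi] at hj
    exact sub_ne_zero_of_ne (fun hc => (ne_of_gt hj) (ha hc))
  have hvm : Matrix.vecMul lam V = 0 := by
    funext j
    rw [hV]
    have : Matrix.vecMul lam (Matrix.vandermonde a) j = ∑ i, lam i * (a i) ^ (j : ℕ) := by
      simp [Matrix.vecMul, Matrix.vandermonde, dotProduct]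
    rw [this]
    have hj : (j : ℕ) ≤ h := by
      have := j.2
      omega
    simpa using hmom j hj
  have := congrArg (fun v => Matrix.vecMul v (V⁻¹)) hvm
  simpa [Matrix.vecMul_vecMul, Matrix.mul_nonsing_inv V hdet, Matrix.vecMul_one,
    Matrix.zero_vecMul] using this


theorem select_c (p n : ℕ) [Fact p.Prime] (hpn : 2 * n < p)
    (a : Fin n → ZMod p) (ha : Function.Injective a) :
    ∃ c : Fin n → ZMod p, (∀ j, c j ∉ Set.range a) ∧
      (Matrix.of fun i j : Fin n => (a i - c j) ^ (p / 2)).det ≠ 0 := by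
  classical
  set Tset : Set (ZMod p) := (Set.range a)ᶜ with hTset
  set A : Matrix (Fin n) Tset (ZMod p) :=
    Matrix.of (fun i (c : Tset) => (a i - (c : ZMod p)) ^ (p / 2)) with hA
  have hinj : Function.Injective Aᵀ.mulVecLin := by
    rw [← LinearMap.ker_eq_bot]
    refine LinearMap.ker_eq_bot'.mpr (fun lam hlam0 => ?_)
    refine moments_zero p n hpn a ha lam (fun c hc => ?_)
    have := congrFun hlam0 ⟨c, hc⟩
    simp only [Matrix.mulVecLin_apply, Matrix.mulVec, dotProduct,
      Matrix.transpose_apply, Pi.zero_apply, hA, Matrix.of_apply] at this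
    rw [← this]
    exact Finset.sum_congr rfl fun i _ => by ring
  have hrankT : Aᵀ.rank = n := by
    rw [Matrix.rank, LinearMap.finrank_range_of_inj hinj, Module.finrank_pi, Fintype.card_fin]
  have hrankA : A.rank = n := by rw [← Matrix.rank_transpose]; exact hrankT
  have hfr : Module.finrank (ZMod p) (Submodule.span (ZMod p) (Set.range Aᵀ)) = n := by
    exact (Matrix.rank_eq_finrank_span_cols A).symm.trans hrankA
  have hsp : Submodule.span (ZMod p) (Set.range Aᵀ) = ⊤ := by
    refine Submodule.eq_top_of_finrank_eq ?_
    rw [hfr, Module.finrank_pi, Fintype.card_fin]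
  obtain ⟨bset, hbsub, -, hbspan, hbind⟩ :=
    exists_linearIndepOn_id_extension (linearIndepOn_empty (ZMod p) id)
      (Set.empty_subset (Set.range Aᵀ))
  have hspan2 : Submodule.span (ZMod p) bset = ⊤ := by
    rw [eq_top_iff, ← hsp]
    exact Submodule.span_le.mpr hbspan
  haveI : Fintype bset := ((Set.finite_range Aᵀ).subset hbsub).fintype
  let B : Module.Basis bset (ZMod p) (Fin n → ZMod p) :=
    Module.Basis.mk (v := ((↑) : bset → Fin n → ZMod p)) hbind (by rw [Subtype.range_coe]; exact le_of_eq hspan2.symm)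
  have hcard : Fintype.card bset = n := by
    have h1 := Module.finrank_eq_card_basis B
    rw [Module.finrank_pi, Fintype.card_fin] at h1
    exact h1.symm
  let e : Fin n ≃ bset := (Fintype.equivFinOfCardEq hcard).symm
  have hbx : ∀ x : bset, ∃ ct : Tset, Aᵀ ct = (x : Fin n → ZMod p) := fun x => hbsub x.2
  set cfun : Fin n → ZMod p := fun j => ((hbx (e j)).choose : ZMod p) with hcfun
  have hc1 : ∀ j, (cfun j) ∉ Set.range a := fun j => ((hbx (e j)).choose).2
  have hAc : ∀ j, (fun i => (a i - cfun j) ^ (p / 2)) = ((e j : bset) : Fin n → ZMod p) := by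
    intro j
    have := (hbx (e j)).choose_spec
    rw [← this]
    rfl
  set M : Matrix (Fin n) (Fin n) (ZMod p) :=
    Matrix.of (fun i j : Fin n => (a i - cfun j) ^ (p / 2)) with hM
  have hMrange : Set.range Mᵀ = bset := by
    have : Mᵀ = fun j => ((e j : bset) : Fin n → ZMod p) := by
      funext j
      have := hAc j
      rw [← this]
      rfl
    rw [this]
    have : (fun j => ((e j : bset) : Fin n → ZMod p)) = (fun x : bset => (x : Fin n → ZMod p)) ∘ e := rfl
    rw [this, Set.range_comp, Set.range_eq_univ.mpr e.surjective, Set.image_univ,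
      Subtype.range_coe]
  have hMsur : Function.Surjective M.mulVecLin := by
    rw [← LinearMap.range_eq_top, Matrix.range_mulVecLin, show Set.range M.col = bset from hMrange]
    exact hspan2
  have hMinj : Function.Injective M.mulVecLin := LinearMap.injective_iff_surjective.mpr hMsur
  have hUnitLin : IsUnit (Matrix.toLinAlgEquiv' M) := by
    rw [Module.End.isUnit_iff]
    exact ⟨hMinj, hMsur⟩
  have hUnitM : IsUnit M := by
    have := hUnitLin.map (Matrix.toLinAlgEquiv'.symm : _ ≃ₐ[ZMod p] _)
    simpa using this
  have hdet : M.det ≠ 0 := by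
    have := (Matrix.isUnit_iff_isUnit_det M).mp hUnitM
    exact this.ne_zero
  exact ⟨cfun, hc1, hdet⟩


theorem det_lift (p n : ℕ) [Fact p.Prime]
    (s : Fin n → Fin n → ℤ) (q : Fin n → Fin n → ZMod p)
    (hdet : (Matrix.of fun i j : Fin n => ((s i j : ℤ) : ZMod p)).det ≠ 0) :
    (Matrix.of fun i j : Fin n => (s i j : ℂ) * (zet p) ^ (q i j).val).det ≠ 0 := by
  classical
  have hp : p.Prime := Fact.out
  set P : Polynomial ℤ :=
    (Matrix.of fun i j : Fin n => (C (s i j)) * X ^ (q i j).val).det with hP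
  have hPval : Polynomial.eval₂ (Int.castRingHom ℂ) (zet p) P
      = (Matrix.of fun i j : Fin n => (s i j : ℂ) * (zet p) ^ (q i j).val).det := by
    rw [hP]
    have h := RingHom.map_det (Polynomial.eval₂RingHom (Int.castRingHom ℂ) (zet p))
      (Matrix.of fun i j : Fin n => (C (s i j)) * X ^ (q i j).val)
    rw [show Polynomial.eval₂ (Int.castRingHom ℂ) (zet p)
        ((Matrix.of fun i j : Fin n => (C (s i j)) * X ^ (q i j).val)).det
        = Polynomial.eval₂RingHom (Int.castRingHom ℂ) (zet p)
        ((Matrix.of fun i j : Fin n => (C (s i j)) * X ^ (q i j).val)).det from rfl, h]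
    congr 1
    funext i j
    simp only [RingHom.mapMatrix_apply, Matrix.map_apply, Matrix.of_apply,
      Polynomial.coe_eval₂RingHom]
    rw [Polynomial.eval₂_mul, Polynomial.eval₂_C, Polynomial.eval₂_X_pow]
    rfl
  have hP1 : P.eval 1 = (Matrix.of fun i j : Fin n => s i j).det := by
    rw [hP]
    have h := RingHom.map_det (Polynomial.evalRingHom (1 : ℤ))
      (Matrix.of fun i j : Fin n => (C (s i j)) * X ^ (q i j).val)
    rw [show Polynomial.eval 1
        ((Matrix.of fun i j : Fin n => (C (s i j)) * X ^ (q i j).val)).det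
        = Polynomial.evalRingHom (1 : ℤ)
        ((Matrix.of fun i j : Fin n => (C (s i j)) * X ^ (q i j).val)).det from rfl, h]
    congr 1
    funext i j
    simp [RingHom.mapMatrix_apply, Matrix.map_apply]
  have hP1mod : ((P.eval 1 : ℤ) : ZMod p) ≠ 0 := by
    rw [hP1]
    have h := RingHom.map_det (Int.castRingHom (ZMod p)) (Matrix.of fun i j : Fin n => s i j)
    rw [show (((Matrix.of fun i j : Fin n => s i j).det : ℤ) : ZMod p)
        = Int.castRingHom (ZMod p) ((Matrix.of fun i j : Fin n => s i j).det) from rfl, h]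
    have : (Int.castRingHom (ZMod p)).mapMatrix (Matrix.of fun i j : Fin n => s i j)
        = (Matrix.of fun i j : Fin n => ((s i j : ℤ) : ZMod p)) := by
      funext i j
      simp [RingHom.mapMatrix_apply, Matrix.map_apply]
    rw [this]
    exact hdet
  intro h0
  have haev : Polynomial.aeval (zet p) P = 0 := by
    rw [Polynomial.aeval_def, algebraMap_int_eq, hPval]; exact h0
  have hint : IsIntegral ℤ (zet p) := (zet_prim p).isIntegral hp.pos
  have hdvd : minpoly ℤ (zet p) ∣ P := minpoly.isIntegrallyClosed_dvd hint haev
  rw [← Polynomial.cyclotomic_eq_minpoly (zet_prim p) hp.pos] at hdvd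
  obtain ⟨R, hR⟩ := hdvd
  have : P.eval 1 = p * R.eval 1 := by
    rw [hR, Polynomial.eval_mul, Polynomial.eval_one_cyclotomic_prime]
  rw [this] at hP1mod
  push_cast at hP1mod
  simp [ZMod.natCast_self] at hP1mod


section main
variable (p : ℕ) [Fact p.Prime]

lemma chi_pow (x : ZMod p) : ((quadraticChar (ZMod p) x : ℤ) : ZMod p) = x ^ (p / 2) := by
  have hxx : ((x.val : ℤ) : ZMod p) = x := by push_cast; exact ZMod.natCast_rightInverse x
  have h1 := legendreSym.eq_pow p (x.val : ℤ)
  rw [show legendreSym p (x.val : ℤ) = quadraticChar (ZMod p) (((x.val : ℤ) : ZMod p)) from rfl,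
    hxx] at h1
  exact h1

lemma sum_psi_quad (hp5 : 5 ≤ p) {α : ZMod p} (hα : α ≠ 0) (β : ZMod p) :
    ∑ m : ZMod p, psi p (α * m ^ 2 + β * m)
      = psi p (-β ^ 2 * (4 * α)⁻¹) * (chiC p α * gs p) := by
  have hp : p.Prime := Fact.out
  have hp2 : p ≠ 2 := by omega
  have h2 : (2 : ZMod p) ≠ 0 := by
    intro h0
    have h0' : ((2 : ℕ) : ZMod p) = 0 := by exact_mod_cast h0
    have hd := (ZMod.natCast_eq_zero_iff 2 p).mp h0'
    have := Nat.le_of_dvd (by norm_num) hd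
    omega
  have h4 : (4 : ZMod p) ≠ 0 := by
    have h44 : (4 : ZMod p) = 2 * 2 := by norm_num
    rw [h44]
    exact mul_ne_zero h2 h2
  set γ : ZMod p := β * (2 * α)⁻¹ with hγ
  have h2α : (2 : ZMod p) * α ≠ 0 := mul_ne_zero h2 hα
  have hγ2 : 2 * α * γ = β := by
    rw [hγ, mul_comm β _, ← mul_assoc, mul_inv_cancel₀ h2α, one_mul]
  have hid : ∀ m : ZMod p, α * m ^ 2 + β * m = α * (m + γ) ^ 2 + (-(α * γ ^ 2)) := by
    intro m
    have : α * (m + γ) ^ 2 + (-(α * γ ^ 2)) = α * m ^ 2 + (2 * α * γ) * m := by ring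
    rw [this, hγ2]
  have hsplit : ∀ m : ZMod p, psi p (α * m ^ 2 + β * m)
      = psi p (α * (m + γ) ^ 2) * psi p (-(α * γ ^ 2)) := by
    intro m
    rw [hid m, AddChar.map_add_eq_mul]
  rw [Finset.sum_congr rfl fun m _ => hsplit m]
  rw [← Finset.sum_mul]
  have hre : ∑ m : ZMod p, psi p (α * (m + γ) ^ 2) = ∑ u : ZMod p, psi p (α * u ^ 2) :=
    Fintype.sum_equiv (Equiv.addRight γ) _ _ (fun m => rfl)
  rw [hre, sum_psi_sq p hp2 hα]
  have hq : -(α * γ ^ 2) = -β ^ 2 * (4 * α)⁻¹ := by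
    rw [hγ]
    have h4α : (4 : ZMod p) * α ≠ 0 := mul_ne_zero h4 hα
    field_simp
    ring
  rw [hq]
  ring

theorem chirp_dzero (n : ℕ) (hp5 : 5 ≤ p) (hpn : 2 * n < p)
    (a b : Fin n → ZMod p) (ha : Function.Injective a) (d : Fin n → ℂ)
    (hrel : ∀ m : ZMod p, ∑ i, d i * psi p (a i * m ^ 2 + b i * m) = 0) :
    ∀ i, d i = 0 := by
  classical
  have hp : p.Prime := Fact.out
  have hp2 : p ≠ 2 := by omega
  obtain ⟨c, hcr, hcdet⟩ := select_c p n hpn a ha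
  have hαne : ∀ i j, a i - c j ≠ 0 := by
    intro i j h0
    exact hcr j ⟨i, by rwa [sub_eq_zero] at h0⟩
  set q : Fin n → Fin n → ZMod p := fun i j => -(b i) ^ 2 * (4 * (a i - c j))⁻¹ with hqdef
  set s : Fin n → Fin n → ℤ := fun i j => quadraticChar (ZMod p) (a i - c j) with hsdef
  set N : Matrix (Fin n) (Fin n) ℂ :=
    Matrix.of (fun i j : Fin n => ∑ m : ZMod p, psi p ((a i - c j) * m ^ 2 + b i * m)) with hN
  -- Step 1 : relation transfers
  have hstep1 : ∀ j, ∑ i, d i * N i j = 0 := by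
    intro j
    have hzero : ∑ m : ZMod p, psi p (-(c j) * m ^ 2) *
        (∑ i, d i * psi p (a i * m ^ 2 + b i * m)) = 0 := by
      rw [Finset.sum_congr rfl fun m _ => by rw [hrel m, mul_zero]]
      exact Finset.sum_const_zero
    calc ∑ i, d i * N i j
        = ∑ i, ∑ m : ZMod p, d i * psi p ((a i - c j) * m ^ 2 + b i * m) := by
          refine Finset.sum_congr rfl fun i _ => ?_
          rw [hN]
          simp only [Matrix.of_apply]
          rw [Finset.mul_sum]
      _ = ∑ m : ZMod p, ∑ i, d i * psi p ((a i - c j) * m ^ 2 + b i * m) := Finset.sum_comm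
      _ = ∑ m : ZMod p, psi p (-(c j) * m ^ 2) *
            (∑ i, d i * psi p (a i * m ^ 2 + b i * m)) := by
          refine Finset.sum_congr rfl fun m _ => ?_
          rw [Finset.mul_sum]
          refine Finset.sum_congr rfl fun i _ => ?_
          rw [← mul_assoc, mul_comm (psi p (-(c j) * m ^ 2)) (d i), mul_assoc,
            ← AddChar.map_add_eq_mul]
          congr 2
          ring
      _ = 0 := hzero
  -- Step 2 : Gauss sum evaluation
  have hNval : ∀ i j, N i j = psi p (q i j) * (chiC p (a i - c j) * gs p) := by
    intro i j
    rw [hN]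
    simp only [Matrix.of_apply]
    exact sum_psi_quad p hp5 (hαne i j) (b i)
  set B : Matrix (Fin n) (Fin n) ℂ :=
    Matrix.of (fun i j : Fin n => (s i j : ℂ) * (zet p) ^ ((q i j).val)) with hB
  have hNB : N = gs p • B := by
    funext i j
    rw [hNval i j]
    simp only [Matrix.smul_apply, hB, Matrix.of_apply, smul_eq_mul]
    rw [psi_apply]
    have hchi : chiC p (a i - c j) = ((s i j : ℤ) : ℂ) := by
      rw [hsdef]
      simp [chiC, chiZ, MulChar.ringHomComp_apply]
    rw [hchi]
    ring
  have hdetB : B.det ≠ 0 := by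
    refine det_lift p n s q ?_
    have : (Matrix.of fun i j : Fin n => ((s i j : ℤ) : ZMod p))
        = (Matrix.of fun i j : Fin n => (a i - c j) ^ (p / 2)) := by
      funext i j
      simp only [Matrix.of_apply, hsdef]
      exact chi_pow p (a i - c j)
    rw [this]
    exact hcdet
  have hdetN : N.det ≠ 0 := by
    rw [hNB, Matrix.det_smul]
    exact mul_ne_zero (pow_ne_zero _ (gs_ne_zero p hp2)) hdetB
  have hvm : Matrix.vecMul d N = 0 := by
    funext j
    simp only [Matrix.vecMul, dotProduct, Pi.zero_apply]
    exact hstep1 j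
  have hd0 : d = 0 := by
    have hu : IsUnit N.det := IsUnit.mk0 _ hdetN
    have := congrArg (fun v => Matrix.vecMul v (N⁻¹)) hvm
    simpa [Matrix.vecMul_vecMul, Matrix.mul_nonsing_inv N hu, Matrix.vecMul_one,
      Matrix.zero_vecMul] using this
  intro i
  rw [hd0]
  rfl
end main


lemma gabor_eq (M : ℕ) [Fact M.Prime] (k l m : Fin M) :
    gabor M k l m
      = psi M (((((m : ℕ) : ZMod M) - ((k : ℕ) : ZMod M)) ^ 3
          + ((l : ℕ) : ZMod M) * ((m : ℕ) : ZMod M))) := by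
  unfold gabor
  have hxc : ((((m : ℕ) : ℂ) - ((k : ℕ) : ℂ)) ^ 3 + ((l : ℕ) : ℂ) * ((m : ℕ) : ℂ))
      = (((((m : ℕ) : ℤ) - ((k : ℕ) : ℤ)) ^ 3 + ((l : ℕ) : ℤ) * ((m : ℕ) : ℤ) : ℤ) : ℂ) := by
    push_cast; ring
  rw [hxc, exp_int]
  congr 1
  push_cast
  ring



/-- For a prime `M ≥ 5` and `1 ≤ ñ ≤ ⌊M/2⌋`, any `ñ` Gabor vectors with pairwise
distinct shift indices (one codeword per active user) are linearly independent in `ℂ^M`;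
in particular they span a subspace of dimension exactly `ñ`. -/
theorem gabor_active_set_linearIndependent (M n : ℕ) (hM : Nat.Prime M) (hM5 : 5 ≤ M)
    (hn1 : 1 ≤ n) (hn2 : n ≤ M / 2)
    (k l : Fin n → Fin M) (hk : Function.Injective k) :
    LinearIndependent ℂ (fun i : Fin n => gabor M (k i) (l i)) ∧
    Module.finrank ℂ
      (Submodule.span ℂ (Set.range fun i : Fin n => gabor M (k i) (l i))) = n := by
  haveI : Fact M.Prime := ⟨hM⟩
  have hodd : M % 2 = 1 := by
    obtain ⟨t, ht⟩ := hM.odd_of_ne_two (by omega)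
    omega
  have hpn : 2 * n < M := by omega
  have hli : LinearIndependent ℂ (fun i : Fin n => gabor M (k i) (l i)) := by
    rw [Fintype.linearIndependent_iff]
    intro g hg
    set κ : Fin n → ZMod M := fun i => (((k i : ℕ)) : ZMod M) with hκ
    set lam : Fin n → ZMod M := fun i => (((l i : ℕ)) : ZMod M) with hlam
    have hκinj : Function.Injective κ := by
      intro i j hij
      apply hk
      have h1 : ((k i : ℕ) : ZMod M).val = ((k j : ℕ) : ZMod M).val := by
        simp only [hκ] at hij
        rw [hij]
      rw [ZMod.val_cast_of_lt (k i).2, ZMod.val_cast_of_lt (k j).2] at h1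
      exact Fin.ext h1
    have h3 : (3 : ZMod M) ≠ 0 := by
      intro h0
      have h0' : ((3 : ℕ) : ZMod M) = 0 := by exact_mod_cast h0
      have hd := (ZMod.natCast_eq_zero_iff 3 M).mp h0'
      have := Nat.le_of_dvd (by norm_num) hd
      omega
    set a : Fin n → ZMod M := fun i => -3 * κ i with haa
    set b : Fin n → ZMod M := fun i => 3 * (κ i) ^ 2 + lam i with hbb
    set d : Fin n → ℂ := fun i => g i * psi M (-(κ i) ^ 3) with hdd
    have ha : Function.Injective a := by
      intro i j hij
      apply hκinj
      have h30 : (-3 : ZMod M) ≠ 0 := neg_ne_zero.mpr h3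
      exact mul_left_cancel₀ h30 hij
    have hrel : ∀ m : ZMod M, ∑ i, d i * psi M (a i * m ^ 2 + b i * m) = 0 := by
      intro m
      have hMpos : 0 < M := hM.pos
      set mf : Fin M := ⟨m.val, ZMod.val_lt m⟩ with hmf
      have hmval : (((mf : ℕ)) : ZMod M) = m := by
        rw [hmf]
        exact ZMod.natCast_rightInverse m
      have hg' := congrFun hg mf
      rw [Finset.sum_apply] at hg'
      simp only [Pi.smul_apply, smul_eq_mul, Pi.zero_apply] at hg'
      have hterm : ∀ i, g i * gabor M (k i) (l i) mf
          = psi M (m ^ 3) * (d i * psi M (a i * m ^ 2 + b i * m)) := by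
        intro i
        rw [gabor_eq M (k i) (l i) mf, hmval]
        have hsplit : ((m - κ i) ^ 3 + lam i * m)
            = m ^ 3 + ((a i * m ^ 2 + b i * m) + (-(κ i) ^ 3)) := by
          rw [haa, hbb]
          ring
        rw [hsplit, AddChar.map_add_eq_mul, AddChar.map_add_eq_mul, hdd]
        ring
      rw [Finset.sum_congr rfl fun i _ => hterm i, ← Finset.mul_sum] at hg'
      exact (mul_eq_zero.mp hg').resolve_left (psi_ne_zero M (m ^ 3))
    have hd0 := chirp_dzero M n hM5 hpn a b ha d hrel
    intro i
    have := hd0 i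
    rw [hdd] at this
    exact (mul_eq_zero.mp this).resolve_right (psi_ne_zero M _)
  refine ⟨hli, ?_⟩
  rw [finrank_span_eq_card hli, Fintype.card_fin]
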